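/- For g = exp(tE) with E = E⁺ + E⁻ = [[0,1],[1,0]], the normalized spherical polynomial ψ_{m,l}(g) = (2^m / binom(m,k)) φ_{m,l}(g), l = m−2k, is a trigonometric polynomial in t whose leading term is e^{imt}; that is, ψ_{m,l}(exp(tE)) − e^{imt} is a linear combination of e^{ijt} with |j| < m. -/

import Mathlib

open Complex

/- In the orthogonal monomial basis of Sᵐ(ℂ²), normalized so that
`binom(m,k)‖e₁^k ⊙ e₂^{m-k}‖² = 1`, the spherical polynomial
`φ_{m,l}(g) = binom(m,k)·⟨g(e₁^k ⊙ e₂^{m-k}), e₁^k ⊙ e₂^{m-k}⟩`, `l = m − 2k`. -/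
noncomputable def phi (m k : ℕ) (g : Matrix (Fin 2) (Fin 2) ℂ) : ℂ :=
  ∑ i ∈ Finset.range (k + 1),
    (Nat.choose k i : ℂ) * (Nat.choose (m - k) (k - i) : ℂ) *
      g 0 0 ^ i * g 1 0 ^ (k - i) * g 0 1 ^ (k - i) * g 1 1 ^ ((m - k) - (k - i))

/-- The normalized spherical polynomial `ψ_{m,l} = (2^m / binom(m,k)) φ_{m,l}`. -/
noncomputable def psi (m k : ℕ) (g : Matrix (Fin 2) (Fin 2) ℂ) : ℂ :=
  (2 ^ m / (Nat.choose m k : ℂ)) * phi m k g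

/-- `exp(tE)` for `E = [[0,1],[1,0]]`, after the analytic continuation giving the
rotation matrices `[[cos t, sin t],[−sin t, cos t]]`. -/
noncomputable def rot (t : ℝ) : Matrix (Fin 2) (Fin 2) ℂ :=
  !![Complex.cos t, Complex.sin t; -Complex.sin t, Complex.cos t]

/-- Trigonometric polynomials of degree ≤ n with prescribed top coefficient. -/
def TP (n : ℕ) (a : ℂ) (f : ℝ → ℂ) : Prop :=
  ∃ c : ℤ → ℂ, (∀ j : ℤ, j ∉ Finset.Icc (-(n:ℤ)) (n:ℤ) → c j = 0) ∧ c n = a ∧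
    ∀ t : ℝ, f t = ∑ j ∈ Finset.Icc (-(n:ℤ)) (n:ℤ), c j * Complex.exp ((j:ℂ) * t * I)

lemma TP.congr {n a f g} (h : TP n a f) (hfg : ∀ t, f t = g t) : TP n a g := by
  obtain ⟨c, h0, h1, h2⟩ := h
  exact ⟨c, h0, h1, fun t => (hfg t) ▸ h2 t⟩

lemma TP.smul {n a f} (z : ℂ) (h : TP n a f) : TP n (z * a) (fun t => z * f t) := by
  obtain ⟨c, h0, h1, h2⟩ := h
  refine ⟨fun j => z * c j, fun j hj => ?_, ?_, fun t => ?_⟩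
  · show z * c j = 0
    rw [h0 j hj, mul_zero]
  · show z * c (n:ℤ) = z * a
    rw [h1]
  · show z * f t = _
    rw [h2 t, Finset.mul_sum]
    exact Finset.sum_congr rfl fun j _ => by ring

lemma TP.add {n a b f g} (hf : TP n a f) (hg : TP n b g) :
    TP n (a + b) (fun t => f t + g t) := by
  obtain ⟨c, hc0, hc1, hc2⟩ := hf
  obtain ⟨d, hd0, hd1, hd2⟩ := hg
  refine ⟨fun j => c j + d j, fun j hj => ?_, ?_, fun t => ?_⟩
  · show c j + d j = 0
    rw [hc0 j hj, hd0 j hj, add_zero]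
  · show c (n:ℤ) + d (n:ℤ) = a + b
    rw [hc1, hd1]
  · show f t + g t = _
    rw [hc2 t, hd2 t, ← Finset.sum_add_distrib]
    exact Finset.sum_congr rfl fun j _ => by ring

lemma TP.zero (n : ℕ) : TP n 0 (fun _ => 0) :=
  ⟨fun _ => 0, fun _ _ => rfl, rfl, fun t => by simp⟩

lemma TP.one : TP 0 1 (fun _ => 1) := by
  refine ⟨fun j => if j = 0 then 1 else 0, fun j hj => ?_, by simp, fun t => ?_⟩
  · simp only [Finset.mem_Icc] at hj
    show (if j = 0 then (1:ℂ) else 0) = 0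
    rw [if_neg]; omega
  · simp

lemma key_shift (b : ℕ) (d : ℤ → ℂ) (hd0 : ∀ j : ℤ, j ∉ Finset.Icc (-(b:ℤ)) (b:ℤ) → d j = 0)
    (j1 : ℤ) (N : ℕ) (h1 : -(N:ℤ) ≤ j1 - b) (h2 : j1 + b ≤ (N:ℤ)) (t : ℝ) :
    ∑ s ∈ Finset.Icc (-(N:ℤ)) (N:ℤ), d (s - j1) * Complex.exp ((s:ℂ) * t * I) =
      ∑ j2 ∈ Finset.Icc (-(b:ℤ)) (b:ℤ),
        d j2 * (Complex.exp ((j1:ℂ) * t * I) * Complex.exp ((j2:ℂ) * t * I)) := by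
  rw [← Finset.sum_subset (s₁ := Finset.Icc (j1 - b) (j1 + b))
    (fun x hx => by simp only [Finset.mem_Icc] at *; omega)
    (fun x _ hx => by
      rw [hd0 (x - j1) (by simp only [Finset.mem_Icc] at *; omega), zero_mul])]
  rw [show Finset.Icc (j1 - (b:ℤ)) (j1 + b) =
      Finset.map (addLeftEmbedding j1) (Finset.Icc (-(b:ℤ)) (b:ℤ)) by
    rw [Finset.map_add_left_Icc, ← sub_eq_add_neg]]
  rw [Finset.sum_map]
  refine Finset.sum_congr rfl fun j2 _ => ?_
  have he : addLeftEmbedding j1 j2 = j1 + j2 := rfl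
  rw [he, add_sub_cancel_left, ← Complex.exp_add]
  congr 1
  push_cast
  ring

lemma TP.mul {a b : ℕ} {α β : ℂ} {f g : ℝ → ℂ} (hf : TP a α f) (hg : TP b β g) :
    TP (a + b) (α * β) (fun t => f t * g t) := by
  obtain ⟨c, hc0, hc1, hc2⟩ := hf
  obtain ⟨d, hd0, hd1, hd2⟩ := hg
  refine ⟨fun s => ∑ j ∈ Finset.Icc (-(a:ℤ)) (a:ℤ), c j * d (s - j), fun s hs => ?_, ?_,
    fun t => ?_⟩
  · show (∑ j ∈ Finset.Icc (-(a:ℤ)) (a:ℤ), c j * d (s - j)) = 0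
    refine Finset.sum_eq_zero fun j hj => ?_
    rw [hd0 (s - j) (by simp only [Finset.mem_Icc] at *; push_cast at hs ⊢; omega), mul_zero]
  · show (∑ j ∈ Finset.Icc (-(a:ℤ)) (a:ℤ), c j * d (((a+b:ℕ):ℤ) - j)) = α * β
    rw [Finset.sum_eq_single_of_mem (a:ℤ)
      (by simp only [Finset.mem_Icc]; omega)
      (fun j hj hja => by
        rw [hd0 (((a+b:ℕ):ℤ) - j) (by simp only [Finset.mem_Icc] at *; push_cast at *; omega),
          mul_zero])]
    rw [show ((a+b:ℕ):ℤ) - (a:ℤ) = (b:ℤ) by push_cast; ring, hc1, hd1]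
  · show f t * g t = ∑ s ∈ Finset.Icc (-((a+b:ℕ):ℤ)) ((a+b:ℕ):ℤ),
      (∑ j ∈ Finset.Icc (-(a:ℤ)) (a:ℤ), c j * d (s - j)) * Complex.exp ((s:ℂ) * t * I)
    calc f t * g t
        = ∑ j1 ∈ Finset.Icc (-(a:ℤ)) (a:ℤ), ∑ j2 ∈ Finset.Icc (-(b:ℤ)) (b:ℤ),
            (c j1 * Complex.exp ((j1:ℂ)*t*I)) * (d j2 * Complex.exp ((j2:ℂ)*t*I)) := by
          rw [hc2 t, hd2 t, Finset.sum_mul_sum]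
      _ = ∑ j1 ∈ Finset.Icc (-(a:ℤ)) (a:ℤ), ∑ s ∈ Finset.Icc (-((a+b:ℕ):ℤ)) ((a+b:ℕ):ℤ),
            c j1 * d (s - j1) * Complex.exp ((s:ℂ)*t*I) := by
          refine Finset.sum_congr rfl fun j1 hj1 => ?_
          simp only [Finset.mem_Icc] at hj1
          calc ∑ j2 ∈ Finset.Icc (-(b:ℤ)) (b:ℤ),
                (c j1 * Complex.exp ((j1:ℂ)*t*I)) * (d j2 * Complex.exp ((j2:ℂ)*t*I))
              = c j1 * ∑ j2 ∈ Finset.Icc (-(b:ℤ)) (b:ℤ),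
                  d j2 * (Complex.exp ((j1:ℂ)*t*I) * Complex.exp ((j2:ℂ)*t*I)) := by
                rw [Finset.mul_sum]; exact Finset.sum_congr rfl fun j2 _ => by ring
            _ = c j1 * ∑ s ∈ Finset.Icc (-((a+b:ℕ):ℤ)) ((a+b:ℕ):ℤ),
                  d (s - j1) * Complex.exp ((s:ℂ)*t*I) := by
                rw [key_shift b d hd0 j1 (a+b) (by push_cast; omega) (by push_cast; omega) t]
            _ = ∑ s ∈ Finset.Icc (-((a+b:ℕ):ℤ)) ((a+b:ℕ):ℤ),
                  c j1 * d (s - j1) * Complex.exp ((s:ℂ)*t*I) := by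
                rw [Finset.mul_sum]; exact Finset.sum_congr rfl fun s _ => by ring
      _ = ∑ s ∈ Finset.Icc (-((a+b:ℕ):ℤ)) ((a+b:ℕ):ℤ), ∑ j1 ∈ Finset.Icc (-(a:ℤ)) (a:ℤ),
            c j1 * d (s - j1) * Complex.exp ((s:ℂ)*t*I) := Finset.sum_comm
      _ = ∑ s ∈ Finset.Icc (-((a+b:ℕ):ℤ)) ((a+b:ℕ):ℤ),
            (∑ j ∈ Finset.Icc (-(a:ℤ)) (a:ℤ), c j * d (s - j)) * Complex.exp ((s:ℂ)*t*I) := by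
          refine Finset.sum_congr rfl fun s _ => ?_
          rw [Finset.sum_mul]

lemma TP.pow {α : ℂ} {f : ℝ → ℂ} (h : TP 1 α f) (n : ℕ) :
    TP n (α ^ n) (fun t => f t ^ n) := by
  induction n with
  | zero => exact TP.one.congr (fun t => by simp)
  | succ n ih =>
    have h2 := ih.mul h
    rw [pow_succ]
    exact h2.congr (fun t => by rw [pow_succ])

lemma TP.sum {ι : Type*} (s : Finset ι) (n : ℕ) (α : ι → ℂ) (f : ι → ℝ → ℂ)
    (h : ∀ i ∈ s, TP n (α i) (f i)) :
    TP n (∑ i ∈ s, α i) (fun t => ∑ i ∈ s, f i t) := by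
  classical
  induction s using Finset.induction with
  | empty => exact (TP.zero n).congr (fun t => by simp)
  | insert _ _ hnot ih =>
    rename_i x s'
    rw [Finset.sum_insert hnot]
    exact ((h x (Finset.mem_insert_self x s')).add
      (ih (fun i hi => h i (Finset.mem_insert_of_mem hi)))).congr
      (fun t => by rw [Finset.sum_insert hnot])

lemma tp_cos : TP 1 (1/2) (fun t : ℝ => Complex.cos t) := by
  refine ⟨fun j => if j = 1 ∨ j = -1 then 1/2 else 0, fun j hj => ?_, by norm_num, fun t => ?_⟩
  · simp only [Finset.mem_Icc] at hj
    show (if j = 1 ∨ j = -1 then (1/2 : ℂ) else 0) = 0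
    rw [if_neg]; omega
  · show Complex.cos t = _
    rw [Complex.cos, show ((1:ℕ):ℤ) = 1 by norm_num,
      show Finset.Icc (-(1:ℤ)) 1 = {-1, 0, 1} from by decide,
      Finset.sum_insert (by decide), Finset.sum_insert (by decide), Finset.sum_singleton]
    norm_num
    ring_nf

lemma tp_sin : TP 1 (-I/2) (fun t : ℝ => Complex.sin t) := by
  refine ⟨fun j => if j = 1 then -I/2 else if j = -1 then I/2 else 0, fun j hj => ?_,
    by norm_num, fun t => ?_⟩
  · simp only [Finset.mem_Icc] at hj
    show (if j = 1 then -I/2 else if j = -1 then I/2 else 0) = 0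
    rw [if_neg (by omega), if_neg (by omega)]
  · show Complex.sin t = _
    rw [Complex.sin, show ((1:ℕ):ℤ) = 1 by norm_num,
      show Finset.Icc (-(1:ℤ)) 1 = {-1, 0, 1} from by decide,
      Finset.sum_insert (by decide), Finset.sum_insert (by decide), Finset.sum_singleton]
    norm_num
    ring_nf

lemma tp_neg_sin : TP 1 (I/2) (fun t : ℝ => -Complex.sin t) := by
  have h := tp_sin.smul (-1)
  rw [show (-1 : ℂ) * (-I/2) = I/2 by ring] at h
  exact h.congr (fun t => by ring)

/-- `ψ_{m,l}(exp(tE))` is a trigonometric polynomial in `t` with leading term `e^{imt}`: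
`ψ_{m,l}(exp(tE)) − e^{imt}` is a linear combination of the lower-order exponentials
`e^{ijt}`, `−m ≤ j < m`. -/
theorem psi_leading_term (m k : ℕ) (hk : k ≤ m) (l : ℤ) (hl : l = (m : ℤ) - 2 * k) :
    ∃ c : ℤ → ℂ, ∀ t : ℝ,
      psi m k (rot t) =
        Complex.exp ((m : ℂ) * t * I) +
          ∑ j ∈ Finset.Ico (-(m : ℤ)) (m : ℤ), c j * Complex.exp ((j : ℂ) * t * I) := by
  classical
  set F : Finset ℕ := (Finset.range (k+1)).filter (fun i => k - i ≤ m - k) with hF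
  set term : ℕ → ℝ → ℂ := fun i t =>
    (Nat.choose k i : ℂ) * (Nat.choose (m-k) (k-i) : ℂ) *
      (Complex.cos t ^ i * ((-Complex.sin t) ^ (k-i) *
        (Complex.sin t ^ (k-i) * Complex.cos t ^ ((m-k) - (k-i))))) with hterm
  set topc : ℕ → ℂ := fun i =>
    (Nat.choose k i : ℂ) * (Nat.choose (m-k) (k-i) : ℂ) *
      ((1/2:ℂ) ^ i * ((I/2) ^ (k-i) * ((-I/2) ^ (k-i) * (1/2:ℂ) ^ ((m-k) - (k-i)))))
    with htopc
  -- phi as a sum over F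
  have hphi : ∀ t : ℝ, phi m k (rot t) = ∑ i ∈ F, term i t := by
    intro t
    rw [phi]
    have hentries : ∀ i : ℕ,
        (Nat.choose k i : ℂ) * (Nat.choose (m-k) (k-i) : ℂ) *
          (rot t) 0 0 ^ i * (rot t) 1 0 ^ (k-i) * (rot t) 0 1 ^ (k-i) *
            (rot t) 1 1 ^ ((m-k) - (k-i)) = term i t := by
      intro i
      simp only [rot, Matrix.cons_val', Matrix.cons_val_zero, Matrix.cons_val_one,
        Matrix.head_cons, Matrix.empty_val', Matrix.cons_val_fin_one, Matrix.head_fin_const,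
        Matrix.of_apply, hterm]
      ring
    rw [Finset.sum_congr rfl (fun i _ => hentries i)]
    have hsub : F ⊆ Finset.range (k+1) := Finset.filter_subset _ _
    rw [← Finset.sum_subset hsub]
    intro i hi hni
    simp only [hF, Finset.mem_filter, not_and] at hni
    have h1 : m - k < k - i := by
      have h2 := hni hi
      omega
    rw [hterm]
    simp [Nat.choose_eq_zero_of_lt h1]
  -- each term is TP of degree m with top coefficient topc i
  have hTPterm : ∀ i ∈ F, TP m (topc i) (term i) := by
    intro i hi
    simp only [hF, Finset.mem_filter, Finset.mem_range] at hi
    have h := ((tp_cos.pow i).mul ((tp_neg_sin.pow (k-i)).mul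
      ((tp_sin.pow (k-i)).mul (tp_cos.pow ((m-k)-(k-i)))))).smul
      ((Nat.choose k i : ℂ) * (Nat.choose (m-k) (k-i) : ℂ))
    rw [show i + ((k-i) + ((k-i) + ((m-k) - (k-i)))) = m by omega] at h
    exact h.congr (fun t => rfl)
  -- sum them up
  have hTPsum := TP.sum F m topc term hTPterm
  have hTPpsi := hTPsum.smul ((2:ℂ)^m / (Nat.choose m k : ℂ))
  -- the total top coefficient is 1
  have hchoose_ne : (Nat.choose m k : ℂ) ≠ 0 := by
    exact_mod_cast Nat.cast_ne_zero.mpr (Nat.choose_pos hk).ne'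
  have htop : ((2:ℂ)^m / (Nat.choose m k : ℂ)) * (∑ i ∈ F, topc i) = 1 := by
    have hsummand : ∀ i ∈ F, topc i =
        (Nat.choose k i : ℂ) * (Nat.choose (m-k) (k-i) : ℂ) * (1/2:ℂ) ^ m := by
      intro i hi
      simp only [hF, Finset.mem_filter, Finset.mem_range] at hi
      simp only [htopc]
      congr 1
      calc (1/2:ℂ) ^ i * ((I/2) ^ (k-i) * ((-I/2) ^ (k-i) * (1/2:ℂ) ^ ((m-k) - (k-i))))
          = (1/2:ℂ) ^ i * (((I/2) * (-I/2)) ^ (k-i) * (1/2:ℂ) ^ ((m-k) - (k-i))) := by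
            rw [mul_pow]; ring
        _ = (1/2:ℂ) ^ i * (((1/2:ℂ) * (1/2:ℂ)) ^ (k-i) * (1/2:ℂ) ^ ((m-k) - (k-i))) := by
            have hII := Complex.I_mul_I
            have hI : (I/2) * (-I/2) = (1/2:ℂ)*(1/2:ℂ) := by
              linear_combination (-1/4 : ℂ) * hII
            rw [hI]
        _ = (1/2:ℂ) ^ i * ((1/2:ℂ) ^ ((k-i) + (k-i)) * (1/2:ℂ) ^ ((m-k) - (k-i))) := by
            rw [pow_add, mul_pow]
        _ = (1/2:ℂ) ^ (i + ((k-i) + (k-i)) + ((m-k) - (k-i))) := by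
            rw [pow_add, pow_add]; ring
        _ = (1/2:ℂ) ^ m := by
            congr 1
            omega
    rw [Finset.sum_congr rfl hsummand]
    have hvand : ∑ i ∈ F, (Nat.choose k i : ℂ) * (Nat.choose (m-k) (k-i) : ℂ) =
        (Nat.choose m k : ℂ) := by
      have hsub : F ⊆ Finset.range (k+1) := Finset.filter_subset _ _
      rw [Finset.sum_subset hsub (fun i hi hni => by
        simp only [hF, Finset.mem_filter, not_and] at hni
        have h1 : m - k < k - i := by
          have h2 := hni hi
          omega
        simp [Nat.choose_eq_zero_of_lt h1])]
      have hnat : ∑ i ∈ Finset.range (k+1), (k.choose i) * ((m-k).choose (k-i)) =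
          m.choose k := by
        have h := Nat.add_choose_eq k (m-k) k
        rw [Finset.Nat.sum_antidiagonal_eq_sum_range_succ_mk] at h
        rw [← h]
        congr 1
        omega
      rw [← hnat]
      push_cast
      rfl
    rw [← Finset.sum_mul, hvand]
    have h2 : ((1:ℂ)/2)^m = ((2:ℂ)^m)⁻¹ := by rw [one_div, inv_pow]
    rw [h2]
    field_simp
  rw [htop] at hTPpsi
  -- conclude
  obtain ⟨c, hc0, hc1, hc2⟩ := hTPpsi
  refine ⟨c, fun t => ?_⟩
  have hpsi_t : psi m k (rot t) = ((2:ℂ)^m / (Nat.choose m k : ℂ)) * ∑ i ∈ F, term i t := by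
    rw [psi, hphi t]
  have hc2t := hc2 t
  simp only [] at hc2t
  rw [hpsi_t, hc2t, ← Finset.Ico_insert_right (by omega : -(m:ℤ) ≤ (m:ℤ)),
    Finset.sum_insert Finset.right_notMem_Ico, hc1]
  push_cast
  ring
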